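/- The 5-dimensional Lebesgue volume of the set of x in the simplex S for which no candidate is a Condorcet winner, namely {x ∈ S : ¬(u > 1/2 ∧ v > 1/2) ∧ ¬(w > 1/2 ∧ u < 1/2) ∧ ¬(v < 1/2 ∧ w < 1/2)} where u = x1+x2+x5, v = x1+x2+x3, w = x1+x3+x4, equals 1/1920; equivalently, the limiting probability of Condorcet's paradox under IAC for 3 candidates is 1/16. -/

import Mathlib

open MeasureTheory

lemma measurable_corner (n : ℕ) (r : ℝ) :
    MeasurableSet {x : Fin n → ℝ | (∀ i, 0 ≤ x i) ∧ ∑ i, x i ≤ r} := by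
  have : {x : Fin n → ℝ | (∀ i, 0 ≤ x i) ∧ ∑ i, x i ≤ r}
      = (⋂ i, {x : Fin n → ℝ | 0 ≤ x i}) ∩ {x : Fin n → ℝ | ∑ i, x i ≤ r} := by
    ext x; simp
  rw [this]
  exact (MeasurableSet.iInter fun i =>
      measurableSet_le measurable_const (measurable_pi_apply i)).inter
    (measurableSet_le (Finset.univ.measurable_sum fun i _ => measurable_pi_apply i)
      measurable_const)

lemma volume_corner (n : ℕ) : ∀ r : ℝ, 0 ≤ r →
    volume {x : Fin n → ℝ | (∀ i, 0 ≤ x i) ∧ ∑ i, x i ≤ r}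
      = ENNReal.ofReal (r ^ n / n.factorial) := by
  induction n with
  | zero =>
    intro r hr
    have : {x : Fin 0 → ℝ | (∀ i, 0 ≤ x i) ∧ ∑ i, x i ≤ r} = Set.univ := by
      ext x
      simp only [Set.mem_setOf_eq, Set.mem_univ, iff_true]
      exact ⟨fun i => i.elim0, by simpa using hr⟩
    rw [this, MeasureTheory.volume_pi, Measure.pi_univ]
    simp [hr]
  | succ n ih =>
    intro r hr
    have hmp := (MeasureTheory.volume_preserving_piFinSuccAbove (fun _ : Fin (n+1) => ℝ) 0).symm
    rw [← hmp.measure_preimage (measurable_corner (n+1) r).nullMeasurableSet]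
    have hset : (MeasurableEquiv.piFinSuccAbove (fun _ : Fin (n+1) => ℝ) 0).symm ⁻¹'
        {x : Fin (n+1) → ℝ | (∀ i, 0 ≤ x i) ∧ ∑ i, x i ≤ r}
        = {p : ℝ × (Fin n → ℝ) | ((0 ≤ p.1 ∧ ∀ i, 0 ≤ p.2 i) ∧ p.1 + ∑ i, p.2 i ≤ r)} := by
      ext ⟨t, y⟩
      simp [MeasurableEquiv.piFinSuccAbove, Fin.forall_fin_succ, Fin.sum_univ_succ]
    have hm : MeasurableSet
        {p : ℝ × (Fin n → ℝ) | ((0 ≤ p.1 ∧ ∀ i, 0 ≤ p.2 i) ∧ p.1 + ∑ i, p.2 i ≤ r)} :=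
      hset ▸ (measurable_corner (n+1) r).preimage
        (MeasurableEquiv.piFinSuccAbove (fun _ : Fin (n+1) => ℝ) 0).symm.measurable
    rw [hset, MeasureTheory.Measure.volume_eq_prod, Measure.prod_apply hm]
    have hslice : ∀ t : ℝ,
        volume (Prod.mk t ⁻¹' {p : ℝ × (Fin n → ℝ) | ((0 ≤ p.1 ∧ ∀ i, 0 ≤ p.2 i) ∧ p.1 + ∑ i, p.2 i ≤ r)})
        = Set.indicator (Set.Icc 0 r) (fun t => ENNReal.ofReal ((r - t) ^ n / n.factorial)) t := by
      intro t
      by_cases ht : 0 ≤ t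
      · by_cases htr : t ≤ r
        · have : Prod.mk t ⁻¹' {p : ℝ × (Fin n → ℝ) | ((0 ≤ p.1 ∧ ∀ i, 0 ≤ p.2 i) ∧ p.1 + ∑ i, p.2 i ≤ r)}
              = {y : Fin n → ℝ | (∀ i, 0 ≤ y i) ∧ ∑ i, y i ≤ r - t} := by
            ext y
            simp only [Set.mem_preimage, Set.mem_setOf_eq]
            constructor
            · rintro ⟨⟨-, h2⟩, h3⟩; exact ⟨h2, by linarith⟩
            · rintro ⟨h2, h3⟩; exact ⟨⟨ht, h2⟩, by linarith⟩
          rw [this, ih (r - t) (by linarith), Set.indicator_of_mem (Set.mem_Icc.2 ⟨ht, htr⟩)]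
        · have : Prod.mk t ⁻¹' {p : ℝ × (Fin n → ℝ) | ((0 ≤ p.1 ∧ ∀ i, 0 ≤ p.2 i) ∧ p.1 + ∑ i, p.2 i ≤ r)}
              = ∅ := by
            ext y
            simp only [Set.mem_preimage, Set.mem_setOf_eq, Set.mem_empty_iff_false, iff_false]
            rintro ⟨⟨-, h2⟩, h3⟩
            have : (0:ℝ) ≤ ∑ i, y i := Finset.sum_nonneg fun i _ => h2 i
            linarith
          rw [this, Set.indicator_of_notMem (fun h => htr h.2)]
          simp
      · have : Prod.mk t ⁻¹' {p : ℝ × (Fin n → ℝ) | ((0 ≤ p.1 ∧ ∀ i, 0 ≤ p.2 i) ∧ p.1 + ∑ i, p.2 i ≤ r)}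
            = ∅ := by
          ext y
          simp only [Set.mem_preimage, Set.mem_setOf_eq, Set.mem_empty_iff_false, iff_false]
          rintro ⟨⟨h1, -⟩, -⟩; exact ht h1
        rw [this, Set.indicator_of_notMem (fun h => ht h.1)]
        simp
    simp_rw [hslice]
    rw [lintegral_indicator measurableSet_Icc]
    rw [← ofReal_integral_eq_lintegral_ofReal]
    · rw [MeasureTheory.integral_Icc_eq_integral_Ioc, ← intervalIntegral.integral_of_le hr]
      have : ∫ t in (0:ℝ)..r, (r - t) ^ n / n.factorial
          = (∫ t in (0:ℝ)..r, (r - t) ^ n) / n.factorial := by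
        rw [intervalIntegral.integral_div]
      rw [this, intervalIntegral.integral_comp_sub_left (fun t => t ^ n) r]
      simp only [sub_zero, sub_self]
      rw [integral_pow]
      rw [Nat.factorial_succ]
      congr 1
      push_cast
      field_simp
      simp
    · apply Continuous.integrableOn_Icc
      continuity
    · filter_upwards [ae_restrict_mem measurableSet_Icc] with t ht
      have : 0 ≤ r - t := by linarith [ht.2]
      positivity

lemma volume_affine_preimage (M : Matrix (Fin 5) (Fin 5) ℝ) (hM : M.det ≠ 0) (c : Fin 5 → ℝ)
    (s : Set (Fin 5 → ℝ)) :
    volume {x : Fin 5 → ℝ | M.mulVec x + c ∈ s} = ENNReal.ofReal |M.det|⁻¹ * volume s := by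
  have h1 : {x : Fin 5 → ℝ | M.mulVec x + c ∈ s}
      = (Matrix.toLin' M) ⁻¹' ((fun y => y + c) ⁻¹' s) := by
    ext x; simp [Matrix.toLin'_apply]
  rw [h1, Measure.addHaar_preimage_linearMap volume
    (by rw [LinearMap.det_toLin']; exact hM), LinearMap.det_toLin',
    measure_preimage_add_right, abs_inv]

lemma volume_eval_zero : volume {y : Fin 5 → ℝ | y 0 = 0} = 0 := by
  have h1 : {y : Fin 5 → ℝ | y 0 = 0}
      = (LinearMap.ker (LinearMap.proj (R := ℝ) (φ := fun _ : Fin 5 => ℝ) 0) : Set (Fin 5 → ℝ)) := by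
    ext y; simp [LinearMap.mem_ker]
  rw [h1]
  apply Measure.addHaar_submodule
  intro h
  have : (fun _ : Fin 5 => (1:ℝ)) ∈
      LinearMap.ker (LinearMap.proj (R := ℝ) (φ := fun _ : Fin 5 => ℝ) 0) :=
    h ▸ Submodule.mem_top
  simp [LinearMap.mem_ker] at this

lemma volume_hyperplane (a1 a2 a3 a4 c : ℝ) :
    volume {x : Fin 5 → ℝ | x 0 + a1 * x 1 + a2 * x 2 + a3 * x 3 + a4 * x 4 = c} = 0 := by
  have h1 : {x : Fin 5 → ℝ | x 0 + a1 * x 1 + a2 * x 2 + a3 * x 3 + a4 * x 4 = c}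
      = {x : Fin 5 → ℝ |
          (Matrix.of ![![1,a1,a2,a3,a4],![0,1,0,0,0],![0,0,1,0,0],![0,0,0,1,0],![0,0,0,0,1]]).mulVec x
            + ![-c,0,0,0,0] ∈ {y : Fin 5 → ℝ | y 0 = 0}} := by
    ext x
    simp [Matrix.mulVec, dotProduct, Fin.sum_univ_five]
    constructor <;> intro h <;> linarith
  have hdet : (Matrix.of ![![1,a1,a2,a3,a4],![0,1,0,0,0],![0,0,1,0,0],![0,0,0,1,0],![0,0,0,0,1]]).det = 1 := by
    simp [Matrix.det_succ_row_zero, Fin.sum_univ_succ]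
  rw [h1, volume_affine_preimage _ (by rw [hdet]; norm_num) _ _, volume_eval_zero, mul_zero]

lemma S1_eq :
    {x : Fin 5 → ℝ | 0 ≤ x 1 ∧ 0 ≤ x 2 ∧ x 0 + x 1 + x 2 + x 3 + x 4 ≤ 1 ∧
        1/2 ≤ x 0 + x 1 + x 4 ∧ 1/2 ≤ x 0 + x 2 + x 3 ∧ x 0 + x 1 + x 2 ≤ 1/2}
      = {x : Fin 5 → ℝ |
          (Matrix.of ![![0,2,0,0,0],![0,0,2,0,0],![2,2,0,0,2],![2,0,2,2,0],![-2,-2,-2,-2,-2]]).mulVec x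
            + ![0,0,-1,-1,2]
          ∈ {y : Fin 5 → ℝ | (∀ i, 0 ≤ y i) ∧ ∑ i, y i ≤ 1}} := by
  ext x
  simp only [Set.mem_setOf_eq, Matrix.mulVec, dotProduct, Fin.sum_univ_five,
    Fin.forall_fin_succ, Fin.forall_fin_zero_pi, Matrix.of_apply, Pi.add_apply,
    Matrix.cons_val_zero, Matrix.cons_val_one, Matrix.head_cons, Matrix.cons_val_two,
    Matrix.tail_cons, Matrix.cons_val_three, Matrix.cons_val_four, Matrix.cons_val_succ]
  constructor
  · rintro ⟨h1, h2, h3, h4, h5, h6⟩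
    refine ⟨⟨by linarith, by linarith, by linarith, by linarith, by linarith, fun i => i.elim0⟩, by linarith⟩
  · rintro ⟨⟨h1, h2, h3, h4, h5, -⟩, h6⟩
    exact ⟨by linarith, by linarith, by linarith, by linarith, by linarith, by linarith⟩

lemma S2_eq :
    {x : Fin 5 → ℝ | 0 ≤ x 0 ∧ 0 ≤ x 3 ∧ 0 ≤ x 4 ∧
        x 0 + x 1 + x 4 ≤ 1/2 ∧ x 0 + x 2 + x 3 ≤ 1/2 ∧ 1/2 ≤ x 0 + x 1 + x 2}
      = {x : Fin 5 → ℝ |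
          (Matrix.of ![![2,0,0,0,0],![0,0,0,2,0],![0,0,0,0,2],![-2,-2,0,0,-2],![-2,0,-2,-2,0]]).mulVec x
            + ![0,0,0,1,1]
          ∈ {y : Fin 5 → ℝ | (∀ i, 0 ≤ y i) ∧ ∑ i, y i ≤ 1}} := by
  ext x
  simp only [Set.mem_setOf_eq, Matrix.mulVec, dotProduct, Fin.sum_univ_five,
    Fin.forall_fin_succ, Fin.forall_fin_zero_pi, Matrix.of_apply, Pi.add_apply,
    Matrix.cons_val_zero, Matrix.cons_val_one, Matrix.head_cons, Matrix.cons_val_two,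
    Matrix.tail_cons, Matrix.cons_val_three, Matrix.cons_val_four, Matrix.cons_val_succ]
  constructor
  · rintro ⟨h1, h2, h3, h4, h5, h6⟩
    refine ⟨⟨by linarith, by linarith, by linarith, by linarith, by linarith, fun i => i.elim0⟩, by linarith⟩
  · rintro ⟨⟨h1, h2, h3, h4, h5, -⟩, h6⟩
    exact ⟨by linarith, by linarith, by linarith, by linarith, by linarith, by linarith⟩

lemma volume_S1 :
    volume {x : Fin 5 → ℝ | 0 ≤ x 1 ∧ 0 ≤ x 2 ∧ x 0 + x 1 + x 2 + x 3 + x 4 ≤ 1 ∧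
        1/2 ≤ x 0 + x 1 + x 4 ∧ 1/2 ≤ x 0 + x 2 + x 3 ∧ x 0 + x 1 + x 2 ≤ 1/2}
      = ENNReal.ofReal (1/3840) := by
  have hdet : (Matrix.of ![![(0:ℝ),2,0,0,0],![0,0,2,0,0],![2,2,0,0,2],![2,0,2,2,0],![-2,-2,-2,-2,-2]]).det = -32 := by
    simp [Matrix.det_succ_row_zero, Fin.sum_univ_succ, Fin.succAbove]
    norm_num
  rw [S1_eq, volume_affine_preimage _ (by rw [hdet]; norm_num) _ _, hdet,
    volume_corner 5 1 zero_le_one, ← ENNReal.ofReal_mul (by norm_num)]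
  norm_num [Nat.factorial]

lemma volume_S2 :
    volume {x : Fin 5 → ℝ | 0 ≤ x 0 ∧ 0 ≤ x 3 ∧ 0 ≤ x 4 ∧
        x 0 + x 1 + x 4 ≤ 1/2 ∧ x 0 + x 2 + x 3 ≤ 1/2 ∧ 1/2 ≤ x 0 + x 1 + x 2}
      = ENNReal.ofReal (1/3840) := by
  have hdet : (Matrix.of ![![(2:ℝ),0,0,0,0],![0,0,0,2,0],![0,0,0,0,2],![-2,-2,0,0,-2],![-2,0,-2,-2,0]]).det = 32 := by
    simp [Matrix.det_succ_row_zero, Fin.sum_univ_succ, Fin.succAbove]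
    norm_num
  rw [S2_eq, volume_affine_preimage _ (by rw [hdet]; norm_num) _ _, hdet,
    volume_corner 5 1 zero_le_one, ← ENNReal.ofReal_mul (by norm_num)]
  norm_num [Nat.factorial]

lemma forall_fin5 (x : Fin 5 → ℝ) :
    (∀ i : Fin 5, 0 ≤ x i) ↔ (0 ≤ x 0 ∧ 0 ≤ x 1 ∧ 0 ≤ x 2 ∧ 0 ≤ x 3 ∧ 0 ≤ x 4) := by
  constructor
  · intro h; exact ⟨h 0, h 1, h 2, h 3, h 4⟩
  · rintro ⟨h0, h1, h2, h3, h4⟩ i; fin_cases i <;> assumption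

lemma measurable_S2 :
    MeasurableSet {x : Fin 5 → ℝ | 0 ≤ x 0 ∧ 0 ≤ x 3 ∧ 0 ≤ x 4 ∧
        x 0 + x 1 + x 4 ≤ 1/2 ∧ x 0 + x 2 + x 3 ≤ 1/2 ∧ 1/2 ≤ x 0 + x 1 + x 2} := by
  rw [S2_eq]
  have hf : Measurable fun x : Fin 5 → ℝ =>
      (Matrix.of ![![(2:ℝ),0,0,0,0],![0,0,0,2,0],![0,0,0,0,2],![-2,-2,0,0,-2],![-2,0,-2,-2,0]]).mulVec x
        + ![0,0,0,1,1] := by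
    have hc : Continuous fun x : Fin 5 → ℝ =>
        (Matrix.of ![![(2:ℝ),0,0,0,0],![0,0,0,2,0],![0,0,0,0,2],![-2,-2,0,0,-2],![-2,0,-2,-2,0]]).mulVec x := by
      have := LinearMap.continuous_of_finiteDimensional
        (Matrix.mulVecLin (Matrix.of ![![(2:ℝ),0,0,0,0],![0,0,0,2,0],![0,0,0,0,2],![-2,-2,0,0,-2],![-2,0,-2,-2,0]]))
      exact this
    exact (hc.add continuous_const).measurable
  exact (measurable_corner 5 1).preimage hf

/-- The 5-dimensional Lebesgue volume of the set of voting situations with no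
Condorcet winner (Condorcet's paradox) equals `1/1920`; equivalently, the limiting
probability of Condorcet's paradox under IAC for 3 candidates is `120 · 1/1920 = 1/16`.
Here `u = x1+x2+x5`, `v = x1+x2+x3`, `w = x1+x3+x4` are the proportions preferring
`a` to `b`, `a` to `c`, `b` to `c` respectively (0-indexed coordinates below). -/
theorem volume_condorcet_paradox :
    volume {x : Fin 5 → ℝ |
      (∀ i, 0 ≤ x i) ∧ x 0 + x 1 + x 2 + x 3 + x 4 ≤ 1 ∧
      ¬((1:ℝ)/2 < x 0 + x 1 + x 4 ∧ (1:ℝ)/2 < x 0 + x 1 + x 2) ∧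
      ¬((1:ℝ)/2 < x 0 + x 2 + x 3 ∧ x 0 + x 1 + x 4 < (1:ℝ)/2) ∧
      ¬(x 0 + x 1 + x 2 < (1:ℝ)/2 ∧ x 0 + x 2 + x 3 < (1:ℝ)/2)} = 1 / 1920 ∧
    120 * volume {x : Fin 5 → ℝ |
      (∀ i, 0 ≤ x i) ∧ x 0 + x 1 + x 2 + x 3 + x 4 ≤ 1 ∧
      ¬((1:ℝ)/2 < x 0 + x 1 + x 4 ∧ (1:ℝ)/2 < x 0 + x 1 + x 2) ∧
      ¬((1:ℝ)/2 < x 0 + x 2 + x 3 ∧ x 0 + x 1 + x 4 < (1:ℝ)/2) ∧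
      ¬(x 0 + x 1 + x 2 < (1:ℝ)/2 ∧ x 0 + x 2 + x 3 < (1:ℝ)/2)} = 1 / 16 := by
  set P : Set (Fin 5 → ℝ) := {x : Fin 5 → ℝ |
      (∀ i, 0 ≤ x i) ∧ x 0 + x 1 + x 2 + x 3 + x 4 ≤ 1 ∧
      ¬((1:ℝ)/2 < x 0 + x 1 + x 4 ∧ (1:ℝ)/2 < x 0 + x 1 + x 2) ∧
      ¬((1:ℝ)/2 < x 0 + x 2 + x 3 ∧ x 0 + x 1 + x 4 < (1:ℝ)/2) ∧
      ¬(x 0 + x 1 + x 2 < (1:ℝ)/2 ∧ x 0 + x 2 + x 3 < (1:ℝ)/2)} with hPdef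
  set S1 : Set (Fin 5 → ℝ) := {x : Fin 5 → ℝ | 0 ≤ x 1 ∧ 0 ≤ x 2 ∧
      x 0 + x 1 + x 2 + x 3 + x 4 ≤ 1 ∧
      1/2 ≤ x 0 + x 1 + x 4 ∧ 1/2 ≤ x 0 + x 2 + x 3 ∧ x 0 + x 1 + x 2 ≤ 1/2} with hS1def
  set S2 : Set (Fin 5 → ℝ) := {x : Fin 5 → ℝ | 0 ≤ x 0 ∧ 0 ≤ x 3 ∧ 0 ≤ x 4 ∧
      x 0 + x 1 + x 4 ≤ 1/2 ∧ x 0 + x 2 + x 3 ≤ 1/2 ∧ 1/2 ≤ x 0 + x 1 + x 2} with hS2def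
  set H1 : Set (Fin 5 → ℝ) :=
      {x : Fin 5 → ℝ | x 0 + 1 * x 1 + 0 * x 2 + 0 * x 3 + 1 * x 4 = 1/2} with hH1def
  set H2 : Set (Fin 5 → ℝ) :=
      {x : Fin 5 → ℝ | x 0 + 1 * x 1 + 1 * x 2 + 0 * x 3 + 0 * x 4 = 1/2} with hH2def
  set H3 : Set (Fin 5 → ℝ) :=
      {x : Fin 5 → ℝ | x 0 + 0 * x 1 + 1 * x 2 + 1 * x 3 + 0 * x 4 = 1/2} with hH3def
  have hH1 : volume H1 = 0 := volume_hyperplane 1 0 0 1 (1/2)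
  have hH2 : volume H2 = 0 := volume_hyperplane 1 1 0 0 (1/2)
  have hH3 : volume H3 = 0 := volume_hyperplane 0 1 1 0 (1/2)
  have hsub1 : S1 ∪ S2 ⊆ P := by
    rintro x (⟨h1, h2, h3, h4, h5, h6⟩ | ⟨h1, h2, h3, h4, h5, h6⟩) <;>
      refine ⟨(forall_fin5 x).2 ⟨by linarith, by linarith, by linarith, by linarith, by linarith⟩,
        by linarith, fun h => by linarith [h.1, h.2], fun h => by linarith [h.1, h.2],
        fun h => by linarith [h.1, h.2]⟩
  have hsub2 : P
      ⊆ (S1 ∪ S2) ∪ (H1 ∪ (H2 ∪ H3)) := by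
    rintro x ⟨hpos, hsum, hn1, hn2, hn3⟩
    obtain ⟨p0, p1, p2, p3, p4⟩ := (forall_fin5 x).1 hpos
    rcases lt_trichotomy (x 0 + x 1 + x 4) (1/2) with hu | hu | hu
    · have hw : x 0 + x 2 + x 3 ≤ 1/2 := by
        by_contra h; push_neg at h; exact hn2 ⟨h, hu⟩
      rcases eq_or_lt_of_le hw with hw' | hw'
      · exact Or.inr (Or.inr (Or.inr (by simp only [hH3def, Set.mem_setOf_eq]; linarith)))
      · have hv : 1/2 ≤ x 0 + x 1 + x 2 := by
          by_contra h; push_neg at h; exact hn3 ⟨h, hw'⟩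
        exact Or.inl (Or.inr ⟨p0, p3, p4, le_of_lt hu, hw, hv⟩)
    · exact Or.inr (Or.inl (by simp only [hH1def, Set.mem_setOf_eq]; linarith))
    · have hv : x 0 + x 1 + x 2 ≤ 1/2 := by
        by_contra h; push_neg at h; exact hn1 ⟨hu, h⟩
      rcases eq_or_lt_of_le hv with hv' | hv'
      · exact Or.inr (Or.inr (Or.inl (by simp only [hH2def, Set.mem_setOf_eq]; linarith)))
      · have hw : 1/2 ≤ x 0 + x 2 + x 3 := by
          by_contra h; push_neg at h; exact hn3 ⟨hv', h⟩
        exact Or.inl (Or.inl ⟨p1, p2, hsum, le_of_lt hu, hw, hv⟩)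
  have hdisj : volume (S1 ∩ S2) = 0 := by
    refine measure_mono_null ?_ hH1
    rintro x ⟨⟨-, -, -, h4, -, -⟩, ⟨-, -, -, h4', -, -⟩⟩
    simp only [hH1def, Set.mem_setOf_eq]; linarith
  have hunion : volume (S1 ∪ S2) = ENNReal.ofReal (1/3840) + ENNReal.ofReal (1/3840) := by
    rw [measure_union₀ measurable_S2.nullMeasurableSet hdisj, volume_S1, volume_S2]
  have key : volume P = 1 / 1920 := by
    have hle : volume P ≤ volume (S1 ∪ S2) := by
      have hN : volume (H1 ∪ (H2 ∪ H3)) = 0 := by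
        rw [measure_union_null_iff]
        refine ⟨hH1, ?_⟩
        rw [measure_union_null_iff]
        exact ⟨hH2, hH3⟩
      calc volume P ≤ volume ((S1 ∪ S2) ∪ (H1 ∪ (H2 ∪ H3))) := measure_mono hsub2
        _ ≤ volume (S1 ∪ S2) + volume (H1 ∪ (H2 ∪ H3)) := measure_union_le _ _
        _ = volume (S1 ∪ S2) := by rw [hN, add_zero]
    have hge : volume (S1 ∪ S2) ≤ volume P := measure_mono hsub1
    have hv : volume (S1 ∪ S2) = 1 / 1920 := by
      rw [hunion, ← ENNReal.ofReal_add (by norm_num) (by norm_num)]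
      rw [show (1:ℝ)/3840 + 1/3840 = 1/1920 by norm_num]
      rw [ENNReal.ofReal_div_of_pos (by norm_num), ENNReal.ofReal_one, ENNReal.ofReal_ofNat]
    rw [← hv]
    exact le_antisymm hle hge
  refine ⟨key, ?_⟩
  rw [key]
  have h1 : (1 : ENNReal) / 1920 = ENNReal.ofReal (1/1920) := by
    rw [ENNReal.ofReal_div_of_pos (by norm_num), ENNReal.ofReal_one, ENNReal.ofReal_ofNat]
  have h2 : (1 : ENNReal) / 16 = ENNReal.ofReal (1/16) := by
    rw [ENNReal.ofReal_div_of_pos (by norm_num), ENNReal.ofReal_one, ENNReal.ofReal_ofNat]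
  rw [h1, h2, show (120:ENNReal) = ENNReal.ofReal 120 by rw [ENNReal.ofReal_ofNat],
    ← ENNReal.ofReal_mul (by norm_num)]
  norm_num
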